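/- arXiv:2310.02552 — 4 statements merged into one kernel-verified Lean document; each statement's English description precedes it below -/
import Mathlib

section
/- Let R > 0 and let r : ℝ × ℝ → ℝ be continuously differentiable, written r(θ,t) with partial derivatives r_θ and r_t, such that there is no point (θ,t) at which r, r_θ, and r_t all vanish simultaneously. On the open set U = {(x,y,z,u,w,t) ∈ ℝ⁶ : x² + y² > 0}, define h : U → ℝ² by h(x,y,z,u,w,t) = (x² + y² + z² - R², u² + w² - r(arctan(z/√(x²+y²)), t)). Then for every point p ∈ U with h(p) = (0,0), the derivative of h at p is a surjective linear map ℝ⁶ → ℝ² (i.e. the 2×6 Jacobian matrix of h at p has rank 2). -/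
open Real

/-- The defining map `h` of the handle-attachment cobordism has surjective
derivative (rank-2 Jacobian) at every zero of `h` with `x² + y² > 0`. -/
theorem stmt_1 (R : ℝ) (hR : 0 < R) (r rθ rt : ℝ → ℝ → ℝ)
    (hr : ContDiff ℝ 1 (fun p : ℝ × ℝ => r p.1 p.2))
    (hrθ : ∀ θ t, HasDerivAt (fun θ' => r θ' t) (rθ θ t) θ)
    (hrt : ∀ θ t, HasDerivAt (fun t' => r θ t') (rt θ t) t)
    (hnv : ∀ θ t, ¬ (r θ t = 0 ∧ rθ θ t = 0 ∧ rt θ t = 0))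
    (h : (Fin 6 → ℝ) → ℝ × ℝ)
    (hh : ∀ p : Fin 6 → ℝ,
      h p = (p 0 ^ 2 + p 1 ^ 2 + p 2 ^ 2 - R ^ 2,
             p 3 ^ 2 + p 4 ^ 2
               - r (Real.arctan (p 2 / Real.sqrt (p 0 ^ 2 + p 1 ^ 2))) (p 5)))
    (p : Fin 6 → ℝ) (hpU : 0 < p 0 ^ 2 + p 1 ^ 2) (hp0 : h p = (0, 0)) :
    DifferentiableAt ℝ h p ∧ Function.Surjective (fderiv ℝ h p) := by
  have hF := funext hh
  subst hF
  have hq0 : p 0 ^ 2 + p 1 ^ 2 ≠ 0 := ne_of_gt hpU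
  have hρpos : 0 < Real.sqrt (p 0 ^ 2 + p 1 ^ 2) := Real.sqrt_pos.mpr hpU
  have e1 : p 0 ^ 2 + p 1 ^ 2 + p 2 ^ 2 = R ^ 2 := by
    have := congrArg Prod.fst hp0
    simp only [Prod.fst] at this
    linarith [this]
  have e2 : p 3 ^ 2 + p 4 ^ 2
      = r (Real.arctan (p 2 / Real.sqrt (p 0 ^ 2 + p 1 ^ 2))) (p 5) := by
    have := congrArg Prod.snd hp0
    simp only [Prod.snd] at this
    linarith [this]
  -- projections are differentiable
  have hi : ∀ i : Fin 6, DifferentiableAt ℝ (fun q : Fin 6 → ℝ => q i) p := by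
    intro i
    exact (ContinuousLinearMap.proj i : (Fin 6 → ℝ) →L[ℝ] ℝ).differentiableAt
  have hsq : DifferentiableAt ℝ (fun q : Fin 6 → ℝ => Real.sqrt (q 0 ^ 2 + q 1 ^ 2)) p :=
    DifferentiableAt.sqrt (((hi 0).pow 2).add ((hi 1).pow 2)) hq0
  have hdiv : DifferentiableAt ℝ
      (fun q : Fin 6 → ℝ => q 2 / Real.sqrt (q 0 ^ 2 + q 1 ^ 2)) p :=
    by simp only [div_eq_mul_inv]; exact (hi 2).mul (hsq.inv (ne_of_gt hρpos))
  have hdθ : DifferentiableAt ℝ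
      (fun q : Fin 6 → ℝ => Real.arctan (q 2 / Real.sqrt (q 0 ^ 2 + q 1 ^ 2))) p :=
    hdiv.arctan
  have hdr : DifferentiableAt ℝ
      (fun q : Fin 6 → ℝ =>
        r (Real.arctan (q 2 / Real.sqrt (q 0 ^ 2 + q 1 ^ 2))) (q 5)) p := by
    have hrp : DifferentiableAt ℝ (fun q : ℝ × ℝ => r q.1 q.2)
        (Real.arctan (p 2 / Real.sqrt (p 0 ^ 2 + p 1 ^ 2)), p 5) :=
      (hr.differentiable one_ne_zero).differentiableAt
    exact DifferentiableAt.comp p hrp (hdθ.prodMk (hi 5))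
  have hdiff : DifferentiableAt ℝ
      (fun p : Fin 6 → ℝ =>
        (p 0 ^ 2 + p 1 ^ 2 + p 2 ^ 2 - R ^ 2,
          p 3 ^ 2 + p 4 ^ 2
            - r (Real.arctan (p 2 / Real.sqrt (p 0 ^ 2 + p 1 ^ 2))) (p 5))) p := by
    refine DifferentiableAt.prodMk ?_ ?_
    · exact ((((hi 0).pow 2).add ((hi 1).pow 2)).add ((hi 2).pow 2)).sub
        (differentiableAt_const _)
    · exact (((hi 3).pow 2).add ((hi 4).pow 2)).sub hdr
  set F : (Fin 6 → ℝ) → ℝ × ℝ := fun p : Fin 6 → ℝ =>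
      (p 0 ^ 2 + p 1 ^ 2 + p 2 ^ 2 - R ^ 2,
        p 3 ^ 2 + p 4 ^ 2
          - r (Real.arctan (p 2 / Real.sqrt (p 0 ^ 2 + p 1 ^ 2))) (p 5)) with hFdef
  have key : ∀ (v : Fin 6 → ℝ) (c : ℝ × ℝ),
      HasDerivAt (fun s : ℝ => F (p + s • v)) c 0 → fderiv ℝ F p v = c := by
    intro v c hc
    have hline : HasDerivAt (fun s : ℝ => p + s • v) v 0 := by
      have := ((hasDerivAt_id (0 : ℝ)).smul_const v).const_add p
      simpa using this
    have hFd : HasFDerivAt F (fderiv ℝ F p) (p + (0 : ℝ) • v) := by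
      rw [show p + (0 : ℝ) • v = p by simp]
      exact hdiff.hasFDerivAt
    have hD := hFd.comp_hasDerivAt 0 hline
    exact (hc.unique hD).symm
  -- radial direction
  set v1 : Fin 6 → ℝ :=
    fun i => if i = 0 then p 0 else if i = 1 then p 1 else if i = 2 then p 2 else 0
    with hv1def
  have hv1 : fderiv ℝ F p v1 = (2 * R ^ 2, 0) := by
    apply key
    have heq : (fun s : ℝ => F (p + s • v1)) = fun s : ℝ =>
        ((p 0 + s * p 0) ^ 2 + (p 1 + s * p 1) ^ 2 + (p 2 + s * p 2) ^ 2 - R ^ 2,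
         p 3 ^ 2 + p 4 ^ 2
           - r (Real.arctan ((p 2 + s * p 2)
               / Real.sqrt ((p 0 + s * p 0) ^ 2 + (p 1 + s * p 1) ^ 2))) (p 5)) := by
      funext s
      simp [hFdef, hv1def]
    rw [heq]
    refine HasDerivAt.prodMk ?_ ?_
    · have h1 := ((((((hasDerivAt_id (0:ℝ)).mul_const (p 0)).const_add (p 0)).pow 2).add
        ((((hasDerivAt_id (0:ℝ)).mul_const (p 1)).const_add (p 1)).pow 2)).add
        ((((hasDerivAt_id (0:ℝ)).mul_const (p 2)).const_add (p 2)).pow 2)).sub_const (R ^ 2)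
      convert h1 using 1
      · simp
      simp only [id_eq, zero_mul, add_zero, pow_one, one_mul, mul_one, Nat.cast_ofNat]
      linear_combination (-2) * e1
    · have hev : (fun s : ℝ => p 3 ^ 2 + p 4 ^ 2
          - r (Real.arctan ((p 2 + s * p 2)
              / Real.sqrt ((p 0 + s * p 0) ^ 2 + (p 1 + s * p 1) ^ 2))) (p 5))
          =ᶠ[nhds (0 : ℝ)] fun _ => p 3 ^ 2 + p 4 ^ 2
          - r (Real.arctan (p 2 / Real.sqrt (p 0 ^ 2 + p 1 ^ 2))) (p 5) := by
        filter_upwards [Ioo_mem_nhds (show (-1 : ℝ) < 0 by norm_num)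
          (show (0 : ℝ) < 1 by norm_num)] with s hs
        have h1s : 0 < 1 + s := by linarith [hs.1]
        have hsq2 : (p 0 + s * p 0) ^ 2 + (p 1 + s * p 1) ^ 2
            = (1 + s) ^ 2 * (p 0 ^ 2 + p 1 ^ 2) := by ring
        rw [hsq2, Real.sqrt_mul (by positivity) _, Real.sqrt_sq h1s.le]
        rw [show p 2 + s * p 2 = (1 + s) * p 2 by ring,
          mul_div_mul_left _ _ (ne_of_gt h1s)]
      exact (hasDerivAt_const 0 _).congr_of_eventuallyEq hev
  have main : ∀ (v2 : Fin 6 → ℝ) (cd : ℝ × ℝ), fderiv ℝ F p v2 = cd → cd.2 ≠ 0 →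
      Function.Surjective (fderiv ℝ F p) := by
    intro v2 cd hv2 hd
    obtain ⟨c, d⟩ := cd
    simp only at hd
    rintro ⟨a, b⟩
    refine ⟨((a - (b / d) * c) / (2 * R ^ 2)) • v1 + (b / d) • v2, ?_⟩
    rw [map_add, map_smul, map_smul, hv1, hv2]
    have hR2 : (2 * R ^ 2 : ℝ) ≠ 0 := by positivity
    simp only [Prod.smul_mk, smul_eq_mul, Prod.mk_add_mk, Prod.mk.injEq]
    constructor
    · field_simp
      ring
    · field_simp
      ring
  refine ⟨hdiff, ?_⟩
  rcases eq_or_lt_of_le (by positivity : (0 : ℝ) ≤ p 3 ^ 2 + p 4 ^ 2) with huw | huw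
  · -- u = w = 0, so r = 0 at the point
    have hr0 : r (Real.arctan (p 2 / Real.sqrt (p 0 ^ 2 + p 1 ^ 2))) (p 5) = 0 := by
      rw [← e2, ← huw]
    by_cases hrt0 : rt (Real.arctan (p 2 / Real.sqrt (p 0 ^ 2 + p 1 ^ 2))) (p 5) = 0
    · -- rθ ≠ 0 : direction e₂
      have hrθ0 : rθ (Real.arctan (p 2 / Real.sqrt (p 0 ^ 2 + p 1 ^ 2))) (p 5) ≠ 0 := by
        intro hcon
        exact hnv _ _ ⟨hr0, hcon, hrt0⟩
      set v2 : Fin 6 → ℝ := fun i => if i = 2 then 1 else 0 with hv2def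
      have heq : (fun s : ℝ => F (p + s • v2)) = fun s : ℝ =>
          (p 0 ^ 2 + p 1 ^ 2 + (p 2 + s) ^ 2 - R ^ 2,
           p 3 ^ 2 + p 4 ^ 2
             - r (Real.arctan ((p 2 + s) / Real.sqrt (p 0 ^ 2 + p 1 ^ 2))) (p 5)) := by
        funext s
        simp [hFdef, hv2def]
      have hder : HasDerivAt (fun s : ℝ => F (p + s • v2))
          (2 * p 2,
           -(rθ (Real.arctan (p 2 / Real.sqrt (p 0 ^ 2 + p 1 ^ 2))) (p 5)
             * (1 / (1 + (p 2 / Real.sqrt (p 0 ^ 2 + p 1 ^ 2)) ^ 2)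
               * (1 / Real.sqrt (p 0 ^ 2 + p 1 ^ 2))))) 0 := by
        rw [heq]
        refine HasDerivAt.prodMk ?_ ?_
        · have h1 := ((((hasDerivAt_id (0:ℝ)).const_add (p 2)).pow 2).const_add
            (p 0 ^ 2 + p 1 ^ 2)).sub_const (R ^ 2)
          convert h1 using 1
          simp
          simp
        · have hinner : HasDerivAt
              (fun s : ℝ => (p 2 + s) / Real.sqrt (p 0 ^ 2 + p 1 ^ 2))
              (1 / Real.sqrt (p 0 ^ 2 + p 1 ^ 2)) 0 :=
            ((hasDerivAt_id (0:ℝ)).const_add (p 2)).div_const _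
          have harc := (Real.hasDerivAt_arctan
            ((p 2 + 0) / Real.sqrt (p 0 ^ 2 + p 1 ^ 2))).comp 0 hinner
          have hrcomp := (hrθ (Real.arctan
            ((p 2 + 0) / Real.sqrt (p 0 ^ 2 + p 1 ^ 2))) (p 5)).comp 0 harc
          have h2 := hrcomp.const_sub (p 3 ^ 2 + p 4 ^ 2)
          convert h2 using 1
          norm_num
          norm_num
      refine main v2 _ (key v2 _ hder) ?_
      simp only
      rw [neg_ne_zero]
      exact mul_ne_zero hrθ0 (mul_ne_zero (one_div_ne_zero (by positivity))
        (one_div_ne_zero (ne_of_gt hρpos)))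
    · -- rt ≠ 0 : direction e₅
      set v2 : Fin 6 → ℝ := fun i => if i = 5 then 1 else 0 with hv2def
      have heq : (fun s : ℝ => F (p + s • v2)) = fun s : ℝ =>
          (p 0 ^ 2 + p 1 ^ 2 + p 2 ^ 2 - R ^ 2,
           p 3 ^ 2 + p 4 ^ 2
             - r (Real.arctan (p 2 / Real.sqrt (p 0 ^ 2 + p 1 ^ 2))) (p 5 + s)) := by
        funext s
        simp [hFdef, hv2def]
      have hder : HasDerivAt (fun s : ℝ => F (p + s • v2))
          (0, -(rt (Real.arctan (p 2 / Real.sqrt (p 0 ^ 2 + p 1 ^ 2))) (p 5))) 0 := by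
        rw [heq]
        refine HasDerivAt.prodMk (hasDerivAt_const _ _) ?_
        have hinner : HasDerivAt (fun s : ℝ => p 5 + s) 1 0 :=
          (hasDerivAt_id (0:ℝ)).const_add (p 5)
        have hcomp := (hrt (Real.arctan
          (p 2 / Real.sqrt (p 0 ^ 2 + p 1 ^ 2))) (p 5 + 0)).comp 0 hinner
        have h2 := hcomp.const_sub (p 3 ^ 2 + p 4 ^ 2)
        convert h2 using 1
        norm_num
        norm_num
      refine main v2 _ (key v2 _ hder) ?_
      simp only
      rw [neg_ne_zero]
      exact hrt0
  · -- r > 0 : direction (0,0,0,u,w,0)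
    set v2 : Fin 6 → ℝ :=
      fun i => if i = 3 then p 3 else if i = 4 then p 4 else 0 with hv2def
    have heq : (fun s : ℝ => F (p + s • v2)) = fun s : ℝ =>
        (p 0 ^ 2 + p 1 ^ 2 + p 2 ^ 2 - R ^ 2,
         (p 3 + s * p 3) ^ 2 + (p 4 + s * p 4) ^ 2
           - r (Real.arctan (p 2 / Real.sqrt (p 0 ^ 2 + p 1 ^ 2))) (p 5)) := by
      funext s
      simp [hFdef, hv2def]
    have hder : HasDerivAt (fun s : ℝ => F (p + s • v2))
        (0, 2 * (p 3 ^ 2 + p 4 ^ 2)) 0 := by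
      rw [heq]
      refine HasDerivAt.prodMk (hasDerivAt_const _ _) ?_
      have h2 := (((((hasDerivAt_id (0:ℝ)).mul_const (p 3)).const_add (p 3)).pow 2).add
        ((((hasDerivAt_id (0:ℝ)).mul_const (p 4)).const_add (p 4)).pow 2)).sub_const
        (r (Real.arctan (p 2 / Real.sqrt (p 0 ^ 2 + p 1 ^ 2))) (p 5))
      convert h2 using 1
      · simp
      simp only [id_eq, zero_mul, add_zero, pow_one, one_mul, mul_one, Nat.cast_ofNat]
      ring
    refine main v2 _ (key v2 _ hder) ?_
    simp only
    exact ne_of_gt (by linarith)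
end

section
/- Let r, R > 0, let θ ∈ ℝ with cos θ ≠ 0, and let r_t, r_θ ∈ ℝ be arbitrary. Then the symmetric 4×4 matrix g with rows [[R² + r_θ²/(4r), 0, r_t·r_θ/(4r), 0], [0, R² cos²θ, 0, 0], [r_t·r_θ/(4r), 0, 1 + r_t²/(4r), 0], [0, 0, 0, r]] is positive definite, and its determinant equals cos²θ · (r·R⁴ + R²·(R²·r_t² + r_θ²)/4) > 0. -/
open Real

/-- The induced metric tensor `g` in coordinates `(θ, φ, t, α)` is positive
definite, with determinant `cos²θ · (r·R⁴ + R²·(R²·r_t² + r_θ²)/4) > 0`. -/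
theorem stmt_5 (r R θ rt rθ : ℝ) (hr : 0 < r) (hR : 0 < R)
    (hcos : Real.cos θ ≠ 0) :
    let g : Matrix (Fin 4) (Fin 4) ℝ :=
      !![R ^ 2 + rθ ^ 2 / (4 * r), 0, rt * rθ / (4 * r), 0;
         0, R ^ 2 * Real.cos θ ^ 2, 0, 0;
         rt * rθ / (4 * r), 0, 1 + rt ^ 2 / (4 * r), 0;
         0, 0, 0, r]
    g.PosDef ∧
    g.det = Real.cos θ ^ 2 * (r * R ^ 4 + R ^ 2 * (R ^ 2 * rt ^ 2 + rθ ^ 2) / 4) ∧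
    0 < g.det := by
  intro g
  have hr' : (4 : ℝ) * r ≠ 0 := by positivity
  have hdet : g.det = Real.cos θ ^ 2 * (r * R ^ 4 + R ^ 2 * (R ^ 2 * rt ^ 2 + rθ ^ 2) / 4) := by
    simp [g, Matrix.det_succ_row_zero, Fin.sum_univ_succ, Fin.succAbove]
    field_simp
    ring
  have hc2 : 0 < Real.cos θ ^ 2 := by positivity
  refine ⟨Matrix.posDef_iff_dotProduct_mulVec.mpr ⟨?_, ?_⟩, hdet, by rw [hdet]; positivity⟩
  · unfold Matrix.IsHermitian
    ext i j
    fin_cases i <;> fin_cases j <;> rfl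
  · intro x hx
    have hx' : x 0 ≠ 0 ∨ x 1 ≠ 0 ∨ x 2 ≠ 0 ∨ x 3 ≠ 0 := by
      by_contra h
      push_neg at h
      apply hx
      ext i
      fin_cases i <;> simp [h.1, h.2.1, h.2.2.1, h.2.2.2]
    simp only [g, dotProduct, Matrix.mulVec, Fin.sum_univ_four,
      Matrix.cons_val_zero, Matrix.cons_val_one, Matrix.head_cons, Pi.star_apply,
      star_trivial, RCLike.re_to_real, Matrix.cons_val', Matrix.cons_val_fin_one,
      Matrix.empty_val', Matrix.head_fin_const, Matrix.cons_val_two, Matrix.cons_val_three, Matrix.vecHead, Matrix.vecTail, Matrix.of_apply, Function.comp, Matrix.cons_val_succ]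
    have key : ∀ a b c d : ℝ,
        (R ^ 2 + rθ ^ 2 / (4 * r)) * a * a + R ^ 2 * Real.cos θ ^ 2 * b * b
          + (rt * rθ / (4 * r)) * a * c + (rt * rθ / (4 * r)) * c * a
          + (1 + rt ^ 2 / (4 * r)) * c * c + r * d * d
        = R ^ 2 * a ^ 2 + R ^ 2 * Real.cos θ ^ 2 * b ^ 2 + c ^ 2 + r * d ^ 2
          + (rθ * a + rt * c) ^ 2 / (4 * r) := by
      intro a b c d
      field_simp
      ring
    have keyx : x 0 * ((R ^ 2 + rθ ^ 2 / (4 * r)) * x 0 + 0 * x 1 + rt * rθ / (4 * r) * x 2 + 0 * x 3) +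
          x 1 * (0 * x 0 + R ^ 2 * Real.cos θ ^ 2 * x 1 + 0 * x 2 + 0 * x 3) +
        x 2 * (rt * rθ / (4 * r) * x 0 + 0 * x 1 + (1 + rt ^ 2 / (4 * r)) * x 2 + 0 * x 3) +
      x 3 * (0 * x 0 + 0 * x 1 + 0 * x 2 + r * x 3)
      = R ^ 2 * x 0 ^ 2 + R ^ 2 * Real.cos θ ^ 2 * x 1 ^ 2 + x 2 ^ 2 + r * x 3 ^ 2
          + (rθ * x 0 + rt * x 2) ^ 2 / (4 * r) := by field_simp; ring
    rw [keyx]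
    have h1 : 0 ≤ (rθ * x 0 + rt * x 2) ^ 2 / (4 * r) := by positivity
    have h3 : 0 ≤ R ^ 2 * Real.cos θ ^ 2 * x 1 ^ 2 := by positivity
    have h4 : 0 ≤ x 2 ^ 2 := sq_nonneg _
    have h5 : 0 ≤ r * x 3 ^ 2 := by positivity
    have h2 : 0 ≤ R ^ 2 * x 0 ^ 2 := by positivity
    rcases hx' with h|h|h|h
    · have := mul_pos (pow_pos hR 2) (sq_pos_of_ne_zero h); linarith
    · have := mul_pos (mul_pos (pow_pos hR 2) hc2) (sq_pos_of_ne_zero h); linarith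
    · have := sq_pos_of_ne_zero h; linarith
    · have := mul_pos hr (sq_pos_of_ne_zero h); linarith
end

section
/- Let f : ℝ → ℝ be defined by f(y) = exp(-1/y - 1/(1-y)) for y ∈ (0,1) and f(y) = 0 otherwise. Then (∫₀ˣ f(y) dy) / (f(x)·x²) tends to 1 as x tends to 0 from the right. -/
open Real Filter

/-- For the bump function `f(y) = exp(-1/y - 1/(1-y))` on `(0,1)` (zero
elsewhere): `(∫₀ˣ f)/(f(x)·x²) → 1` as `x → 0⁺`. -/
theorem stmt_12 (f : ℝ → ℝ)
    (hf : ∀ y, f y = if y ∈ Set.Ioo (0 : ℝ) 1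
      then Real.exp (-1 / y - 1 / (1 - y)) else 0) :
    Filter.Tendsto (fun x => (∫ y in (0 : ℝ)..x, f y) / (f x * x ^ 2))
      (nhdsWithin 0 (Set.Ioi 0)) (nhds 1) := by
  classical
  set e : ℝ → ℝ := fun y => Real.exp (-1 / y - 1 / (1 - y)) with he
  set B : ℝ → ℝ := fun x => (1 / x ^ 2 - 1 / (1 - x) ^ 2) * x ^ 2 + 2 * x with hB
  set g' : ℝ → ℝ := fun x => e x * B x with hg'def
  have hfeq : f = fun y => if y ∈ Set.Ioo (0 : ℝ) 1 then e y else 0 := funext hf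
  have hmeas : Measurable f := by
    rw [hfeq]
    exact Measurable.ite measurableSet_Ioo
      (Real.measurable_exp.comp
        ((measurable_const.div measurable_id).sub
          (measurable_const.div (measurable_const.sub measurable_id)))) measurable_const
  have hf0 : ∀ y, 0 ≤ f y := by
    intro y; rw [hf]; split
    · exact (Real.exp_pos _).le
    · exact le_refl _
  have hf1 : ∀ y, f y ≤ 1 := by
    intro y; rw [hf]; split
    · rename_i hy
      obtain ⟨hy0, hy1⟩ := hy
      apply Real.exp_le_one_iff.mpr
      have h1 : (0:ℝ) ≤ 1 / y := by positivity
      have h2 : (0:ℝ) ≤ 1 / (1 - y) := by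
        have : 0 < 1 - y := by linarith
        positivity
      have h3 : -1 / y = -(1 / y) := by ring
      linarith
    · norm_num
  -- interval integrability on [0, x]
  have hint : ∀ u v : ℝ, IntervalIntegrable f MeasureTheory.volume u v := by
    intro u v
    rw [intervalIntegrable_iff]
    apply MeasureTheory.Measure.integrableOn_of_bounded (M := 1)
    · exact (measure_Ioc_lt_top).ne
    · exact hmeas.aestronglyMeasurable
    · filter_upwards with a
      rw [Real.norm_eq_abs, abs_of_nonneg (hf0 a)]
      exact hf1 a
  -- eventual membership in Ioo 0 (1/2)
  have hmem : ∀ x ∈ Set.Ioo (0:ℝ) (1/2), 0 < x ∧ x < 1 := fun x hx =>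
    ⟨hx.1, by linarith [hx.2]⟩
  -- derivative of e on (0,1)
  have hde : ∀ x ∈ Set.Ioo (0:ℝ) (1/2),
      HasDerivAt e (e x * (1 / x ^ 2 - 1 / (1 - x) ^ 2)) x := by
    intro x hx
    obtain ⟨hx0, hx1⟩ := hmem x hx
    have hx1' : (1:ℝ) - x ≠ 0 := by intro h; nlinarith
    have d1 : HasDerivAt (fun y : ℝ => -1 / y) (1 / x ^ 2) x := by
      have h := (hasDerivAt_inv hx0.ne').neg
      have hfun : (fun y : ℝ => -1 / y) = fun y => -(y⁻¹) := by funext y; ring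
      rw [hfun]
      simpa [one_div, Pi.neg_def] using h
    have d3 : HasDerivAt (fun y : ℝ => 1 / (1 - y)) (1 / (1 - x) ^ 2) x := by
      have h := ((hasDerivAt_const x (1:ℝ)).sub (hasDerivAt_id x)).inv hx1'
      have hfun : (fun y : ℝ => 1 / (1 - y)) = fun y => (1 - y)⁻¹ := by
        funext y; rw [one_div]
      rw [hfun]
      exact h.congr_deriv (by simp)
    exact (d1.sub d3).exp
  -- derivative of G = f * x^2
  have hdG : ∀ x ∈ Set.Ioo (0:ℝ) (1/2),
      HasDerivAt (fun x => f x * x ^ 2) (g' x) x := by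
    intro x hx
    obtain ⟨hx0, hx1⟩ := hmem x hx
    have h1 : HasDerivAt (fun y => e y * y ^ 2)
        (e x * (1 / x ^ 2 - 1 / (1 - x) ^ 2) * x ^ 2 + e x * (↑2 * x ^ 1)) x :=
      (hde x hx).mul (hasDerivAt_pow 2 x)
    have h2 : HasDerivAt (fun y => e y * y ^ 2) (g' x) x := by
      convert h1 using 1
      simp only [hg'def, hB]
      ring
    apply h2.congr_of_eventuallyEq
    have hopen : Set.Ioo (0:ℝ) 1 ∈ nhds x :=
      isOpen_Ioo.mem_nhds ⟨hx0, hx1⟩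
    filter_upwards [hopen] with y hy
    rw [hf y, if_pos hy]
  -- g' ≠ 0 on (0,1/2)
  have hBpos : ∀ x ∈ Set.Ioo (0:ℝ) (1/2), 0 < B x := by
    intro x hx
    obtain ⟨hx0, hx2⟩ := hx
    have hx1 : (0:ℝ) < 1 - x := by linarith
    have h1 : (1 / x ^ 2) * x ^ 2 = 1 := by field_simp
    have h2 : x ^ 2 / (1 - x) ^ 2 < 1 := by
      rw [div_lt_one (by positivity)]
      nlinarith
    have : B x = 1 - x ^ 2 / (1 - x) ^ 2 + 2 * x := by
      simp only [hB]
      field_simp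
    rw [this]
    linarith
  have hg'ne : ∀ x ∈ Set.Ioo (0:ℝ) (1/2), g' x ≠ 0 := by
    intro x hx
    exact mul_ne_zero (Real.exp_pos _).ne' (hBpos x hx).ne'
  -- F → 0
  have hfa : Filter.Tendsto (fun x => ∫ y in (0:ℝ)..x, f y)
      (nhdsWithin 0 (Set.Ioi 0)) (nhds 0) := by
    have hid : Filter.Tendsto (fun x : ℝ => x) (nhdsWithin 0 (Set.Ioi 0)) (nhds 0) :=
      Filter.tendsto_id.mono_left nhdsWithin_le_nhds
    apply tendsto_of_tendsto_of_tendsto_of_le_of_le' tendsto_const_nhds hid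
    · filter_upwards [self_mem_nhdsWithin] with x (hx : 0 < x)
      exact intervalIntegral.integral_nonneg hx.le (fun y _ => hf0 y)
    · filter_upwards [self_mem_nhdsWithin] with x (hx : 0 < x)
      calc (∫ y in (0:ℝ)..x, f y) ≤ ∫ y in (0:ℝ)..x, (1:ℝ) :=
            intervalIntegral.integral_mono_on hx.le (hint 0 x)
              intervalIntegrable_const (fun y _ => hf1 y)
        _ = x := by simp
  -- G → 0
  have hga : Filter.Tendsto (fun x => f x * x ^ 2)
      (nhdsWithin 0 (Set.Ioi 0)) (nhds 0) := by
    have hsq : Filter.Tendsto (fun x : ℝ => x ^ 2) (nhdsWithin 0 (Set.Ioi 0)) (nhds 0) := by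
      have : Filter.Tendsto (fun x : ℝ => x ^ 2) (nhds 0) (nhds 0) := by
        simpa using (continuous_pow 2).tendsto (0:ℝ)
      exact this.mono_left nhdsWithin_le_nhds
    apply tendsto_of_tendsto_of_tendsto_of_le_of_le' tendsto_const_nhds hsq
    · filter_upwards with x
      exact mul_nonneg (hf0 x) (sq_nonneg x)
    · filter_upwards with x
      calc f x * x ^ 2 ≤ 1 * x ^ 2 := by
            exact mul_le_mul_of_nonneg_right (hf1 x) (sq_nonneg x)
        _ = x ^ 2 := one_mul _
  -- f'/g' → 1
  have hdiv : Filter.Tendsto (fun x => f x / g' x)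
      (nhdsWithin 0 (Set.Ioi 0)) (nhds 1) := by
    have hBtend : Filter.Tendsto B (nhdsWithin 0 (Set.Ioi 0)) (nhds 1) := by
      have hcont : Filter.Tendsto (fun x : ℝ => 1 - x ^ 2 / (1 - x) ^ 2 + 2 * x)
          (nhds 0) (nhds 1) := by
        have : ContinuousAt (fun x : ℝ => 1 - x ^ 2 / (1 - x) ^ 2 + 2 * x) 0 := by
          have hc : ContinuousAt (fun x : ℝ => x ^ 2 / (1 - x) ^ 2) 0 :=
            ContinuousAt.div (continuous_pow 2).continuousAt
              ((continuous_const.sub continuous_id).pow 2).continuousAt (by norm_num)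
          exact (continuousAt_const.sub hc).add (continuousAt_const.mul continuousAt_id)
        simpa using this.tendsto
      apply (hcont.mono_left nhdsWithin_le_nhds).congr'
      filter_upwards [self_mem_nhdsWithin] with x (hx : 0 < x)
      simp only [hB]
      field_simp
    have hinv : Filter.Tendsto (fun x => (B x)⁻¹)
        (nhdsWithin 0 (Set.Ioi 0)) (nhds 1) := by
      simpa using hBtend.inv₀ one_ne_zero
    apply hinv.congr'
    have hIoo : Set.Ioo (0:ℝ) (1/2) ∈ nhdsWithin (0:ℝ) (Set.Ioi 0) := by
      apply mem_nhdsWithin.mpr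
      exact ⟨Set.Iio (1/2), isOpen_Iio, by norm_num, by
        intro y hy; exact ⟨hy.2, hy.1⟩⟩
    filter_upwards [hIoo] with x hx
    obtain ⟨hx0, hx1⟩ := hmem x hx
    have hfx : f x = e x := by rw [hf x, if_pos ⟨hx0, hx1⟩]
    rw [hfx, hg'def]
    rw [eq_comm, div_mul_cancel_left₀ (Real.exp_pos _).ne']
  -- derivative of F
  have hdF : ∀ x ∈ Set.Ioo (0:ℝ) (1/2),
      HasDerivAt (fun u => ∫ y in (0:ℝ)..u, f y) (f x) x := by
    intro x hx
    obtain ⟨hx0, hx1⟩ := hmem x hx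
    apply intervalIntegral.integral_hasDerivAt_right (hint 0 x)
      (hmeas.stronglyMeasurable.stronglyMeasurableAtFilter)
    -- continuity at x
    have hopen : Set.Ioo (0:ℝ) 1 ∈ nhds x := isOpen_Ioo.mem_nhds ⟨hx0, hx1⟩
    have hecont : ContinuousAt e x := by
      apply Real.continuous_exp.continuousAt.comp
      apply ContinuousAt.sub
      · exact ContinuousAt.div continuousAt_const continuousAt_id hx0.ne'
      · exact ContinuousAt.div continuousAt_const
          (continuousAt_const.sub continuousAt_id) (by intro h; nlinarith [sub_eq_zero.mp h])
    apply hecont.congr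
    filter_upwards [hopen] with y hy
    rw [hf y, if_pos hy]
  exact HasDerivAt.lhopital_zero_right_on_Ioo (by norm_num : (0:ℝ) < 1/2)
    hdF hdG hg'ne hfa hga hdiv
end

section
/- Let R > 0 and let r : ℝ × ℝ → ℝ be differentiable, written r(θ,t) with partial derivatives r_θ and r_t. Define G : ℝ⁴ → ℝ⁶ by G(θ, φ, t, a) = (cos θ cos φ, cos θ sin φ, sin θ, (√(r(θ,t))/R)·cos(R·a), (√(r(θ,t))/R)·sin(R·a), t). At any point (θ, φ, t, a) with r(θ,t) > 0, the Euclidean inner products of the partial derivatives of G are: ⟨∂G/∂θ, ∂G/∂θ⟩ = 1 + r_θ²/(4·r·R²); ⟨∂G/∂φ, ∂G/∂φ⟩ = cos²θ; ⟨∂G/∂t, ∂G/∂t⟩ = 1 + r_t²/(4·r·R²); ⟨∂G/∂a, ∂G/∂a⟩ = r; ⟨∂G/∂θ, ∂G/∂t⟩ = r_t·r_θ/(4·r·R²); and all other pairs of distinct partial derivatives are orthogonal. -/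
open Real

lemma hd6 {f0 f1 f2 f3 f4 f5 : ℝ → ℝ} {v0 v1 v2 v3 v4 v5 : ℝ} {x : ℝ}
    (h0 : HasDerivAt f0 v0 x) (h1 : HasDerivAt f1 v1 x) (h2 : HasDerivAt f2 v2 x)
    (h3 : HasDerivAt f3 v3 x) (h4 : HasDerivAt f4 v4 x) (h5 : HasDerivAt f5 v5 x) :
    HasDerivAt (fun y => (WithLp.equiv 2 (Fin 6 → ℝ)).symm ![f0 y, f1 y, f2 y, f3 y, f4 y, f5 y])
      ((WithLp.equiv 2 (Fin 6 → ℝ)).symm ![v0, v1, v2, v3, v4, v5]) x := by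
  have hp : HasDerivAt (fun y => ![f0 y, f1 y, f2 y, f3 y, f4 y, f5 y] : ℝ → Fin 6 → ℝ)
      ![v0, v1, v2, v3, v4, v5] x := by
    rw [hasDerivAt_pi]
    intro i
    fin_cases i
    · simpa using h0
    · simpa using h1
    · simpa using h2
    · simpa using h3
    · simpa using h4
    · simpa using h5
  exact ((PiLp.continuousLinearEquiv 2 ℝ (fun _ : Fin 6 => ℝ)).symm.toContinuousLinearMap.hasFDerivAt.comp_hasDerivAt x hp)

lemma inner6 (u0 u1 u2 u3 u4 u5 v0 v1 v2 v3 v4 v5 : ℝ) :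
    (inner ℝ ((WithLp.equiv 2 (Fin 6 → ℝ)).symm ![u0,u1,u2,u3,u4,u5])
      ((WithLp.equiv 2 (Fin 6 → ℝ)).symm ![v0,v1,v2,v3,v4,v5]) : ℝ)
      = u0*v0 + u1*v1 + u2*v2 + u3*v3 + u4*v4 + u5*v5 := by
  have h5 : (5 : Fin 6) = (4 : Fin 5).succ := rfl
  simp [PiLp.inner_apply, RCLike.inner_apply, Fin.sum_univ_six, h5, Matrix.cons_val_succ]
  ring

/-- The repackaged metric (base sphere of radius 1): Euclidean inner products
of the partial derivatives of
`G(θ,φ,t,a) = (cosθ cosφ, cosθ sinφ, sinθ, (√r/R)cos(Ra), (√r/R)sin(Ra), t)`. -/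
theorem stmt_19 (R : ℝ) (hR : 0 < R) (r rθ rt : ℝ → ℝ → ℝ)
    (hrθ : ∀ θ t, HasDerivAt (fun θ' => r θ' t) (rθ θ t) θ)
    (hrt : ∀ θ t, HasDerivAt (fun t' => r θ t') (rt θ t) t)
    (G : ℝ → ℝ → ℝ → ℝ → EuclideanSpace ℝ (Fin 6))
    (hG : ∀ θ φ t a, G θ φ t a = (WithLp.equiv 2 (Fin 6 → ℝ)).symm
      ![Real.cos θ * Real.cos φ, Real.cos θ * Real.sin φ, Real.sin θ,
        (Real.sqrt (r θ t) / R) * Real.cos (R * a),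
        (Real.sqrt (r θ t) / R) * Real.sin (R * a), t])
    (θ φ t a : ℝ) (hpos : 0 < r θ t) :
    (inner ℝ (deriv (fun x => G x φ t a) θ) (deriv (fun x => G x φ t a) θ) : ℝ)
        = 1 + (rθ θ t) ^ 2 / (4 * r θ t * R ^ 2) ∧
    (inner ℝ (deriv (fun x => G θ x t a) φ) (deriv (fun x => G θ x t a) φ) : ℝ)
        = Real.cos θ ^ 2 ∧
    (inner ℝ (deriv (fun x => G θ φ x a) t) (deriv (fun x => G θ φ x a) t) : ℝ)
        = 1 + (rt θ t) ^ 2 / (4 * r θ t * R ^ 2) ∧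
    (inner ℝ (deriv (fun x => G θ φ t x) a) (deriv (fun x => G θ φ t x) a) : ℝ)
        = r θ t ∧
    (inner ℝ (deriv (fun x => G x φ t a) θ) (deriv (fun x => G θ φ x a) t) : ℝ)
        = rt θ t * rθ θ t / (4 * r θ t * R ^ 2) ∧
    (inner ℝ (deriv (fun x => G x φ t a) θ) (deriv (fun x => G θ x t a) φ) : ℝ) = 0 ∧
    (inner ℝ (deriv (fun x => G x φ t a) θ) (deriv (fun x => G θ φ t x) a) : ℝ) = 0 ∧
    (inner ℝ (deriv (fun x => G θ x t a) φ) (deriv (fun x => G θ φ x a) t) : ℝ) = 0 ∧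
    (inner ℝ (deriv (fun x => G θ x t a) φ) (deriv (fun x => G θ φ t x) a) : ℝ) = 0 ∧
    (inner ℝ (deriv (fun x => G θ φ x a) t) (deriv (fun x => G θ φ t x) a) : ℝ) = 0 := by
  set s := Real.sqrt (r θ t) with hs
  have hs0 : s ≠ 0 := ne_of_gt (Real.sqrt_pos.mpr hpos)
  have hssq : s ^ 2 = r θ t := Real.sq_sqrt hpos.le
  have hR0 : R ≠ 0 := ne_of_gt hR
  have hsθ : HasDerivAt (fun x => Real.sqrt (r x t)) (1 / (2 * s) * rθ θ t) θ :=
    (Real.hasDerivAt_sqrt (ne_of_gt hpos)).comp θ (hrθ θ t)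
  have hst : HasDerivAt (fun x => Real.sqrt (r θ x)) (1 / (2 * s) * rt θ t) t :=
    (Real.hasDerivAt_sqrt (ne_of_gt hpos)).comp t (hrt θ t)
  have hRa : HasDerivAt (fun x => R * x) R a := by
    simpa using (hasDerivAt_id a).const_mul R
  have hDθ : deriv (fun x => G x φ t a) θ = (WithLp.equiv 2 (Fin 6 → ℝ)).symm
      ![-Real.sin θ * Real.cos φ, -Real.sin θ * Real.sin φ, Real.cos θ,
        1 / (2 * s) * rθ θ t / R * Real.cos (R * a),
        1 / (2 * s) * rθ θ t / R * Real.sin (R * a), 0] := by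
    rw [show (fun x => G x φ t a) = (fun x => (WithLp.equiv 2 (Fin 6 → ℝ)).symm
      ![Real.cos x * Real.cos φ, Real.cos x * Real.sin φ, Real.sin x,
        (Real.sqrt (r x t) / R) * Real.cos (R * a),
        (Real.sqrt (r x t) / R) * Real.sin (R * a), t]) from funext fun x => hG x φ t a]
    exact (hd6 ((Real.hasDerivAt_cos θ).mul_const _) ((Real.hasDerivAt_cos θ).mul_const _)
      (Real.hasDerivAt_sin θ) ((hsθ.div_const R).mul_const _) ((hsθ.div_const R).mul_const _)
      (hasDerivAt_const θ t)).deriv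
  have hDφ : deriv (fun x => G θ x t a) φ = (WithLp.equiv 2 (Fin 6 → ℝ)).symm
      ![Real.cos θ * -Real.sin φ, Real.cos θ * Real.cos φ, 0, 0, 0, 0] := by
    rw [show (fun x => G θ x t a) = (fun x => (WithLp.equiv 2 (Fin 6 → ℝ)).symm
      ![Real.cos θ * Real.cos x, Real.cos θ * Real.sin x, Real.sin θ,
        (s / R) * Real.cos (R * a), (s / R) * Real.sin (R * a), t]) from funext fun x => hG θ x t a]
    exact (hd6 ((Real.hasDerivAt_cos φ).const_mul _) ((Real.hasDerivAt_sin φ).const_mul _)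
      (hasDerivAt_const φ _) (hasDerivAt_const φ _) (hasDerivAt_const φ _)
      (hasDerivAt_const φ t)).deriv
  have hDt : deriv (fun x => G θ φ x a) t = (WithLp.equiv 2 (Fin 6 → ℝ)).symm
      ![0, 0, 0, 1 / (2 * s) * rt θ t / R * Real.cos (R * a),
        1 / (2 * s) * rt θ t / R * Real.sin (R * a), 1] := by
    rw [show (fun x => G θ φ x a) = (fun x => (WithLp.equiv 2 (Fin 6 → ℝ)).symm
      ![Real.cos θ * Real.cos φ, Real.cos θ * Real.sin φ, Real.sin θ,
        (Real.sqrt (r θ x) / R) * Real.cos (R * a),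
        (Real.sqrt (r θ x) / R) * Real.sin (R * a), x]) from funext fun x => hG θ φ x a]
    exact (hd6 (hasDerivAt_const t _) (hasDerivAt_const t _) (hasDerivAt_const t _)
      ((hst.div_const R).mul_const _) ((hst.div_const R).mul_const _)
      (hasDerivAt_id t)).deriv
  have hDa : deriv (fun x => G θ φ t x) a = (WithLp.equiv 2 (Fin 6 → ℝ)).symm
      ![0, 0, 0, s / R * (-Real.sin (R * a) * R), s / R * (Real.cos (R * a) * R), 0] := by
    rw [show (fun x => G θ φ t x) = (fun x => (WithLp.equiv 2 (Fin 6 → ℝ)).symm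
      ![Real.cos θ * Real.cos φ, Real.cos θ * Real.sin φ, Real.sin θ,
        (s / R) * Real.cos (R * x), (s / R) * Real.sin (R * x), t]) from funext fun x => hG θ φ t x]
    exact (hd6 (hasDerivAt_const a _) (hasDerivAt_const a _) (hasDerivAt_const a _)
      (hRa.cos.const_mul _) (hRa.sin.const_mul _) (hasDerivAt_const a t)).deriv
  rw [hDθ, hDφ, hDt, hDa]
  rw [← hssq]
  refine ⟨?_, ?_, ?_, ?_, ?_, ?_, ?_, ?_, ?_, ?_⟩ <;> rw [inner6]
  · field_simp
    linear_combination (16*s^2*R^2*Real.sin θ^2) * sin_sq_add_cos_sq φ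
      + (16*s^2*R^2) * sin_sq_add_cos_sq θ + (4*(rθ θ t)^2) * sin_sq_add_cos_sq (R*a)
  · linear_combination Real.cos θ^2 * sin_sq_add_cos_sq φ
  · field_simp
    linear_combination (4*(rt θ t)^2) * sin_sq_add_cos_sq (R*a)
  · field_simp
    ring
    linear_combination (s^2) * sin_sq_add_cos_sq (R*a)
  · field_simp
    linear_combination (4*(rθ θ t * rt θ t)) * sin_sq_add_cos_sq (R*a)
  · ring
  · field_simp
    ring
  · ring
  · ring
  · field_simp
    ring
end
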